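/- If M is an (ℓ+1)×(ℓ+1) real matrix with M_{ij} ≤ 0 for all i ≠ j, column sums ∑_i M_{ij} ≥ 0 for all j, and row sums ∑_j M_{ij} ≥ 0 for all i (i.e., M is doubly hyperdominant), then for every monotone function φ : ℝ → ℝ with φ(0) = 0 and all points y_0, …, y_ℓ ∈ ℝ, setting u_i = φ(y_i), we have uᵀ M y ≥ 0. -/
import Mathlib

open intervalIntegral

private lemma key_lemma (φ : ℝ → ℝ) (hm : Monotone φ) (a b : ℝ) :
    φ a * (b - a) ≤ (∫ t in (0:ℝ)..b, φ t) - ∫ t in (0:ℝ)..a, φ t := by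
  rw [integral_interval_sub_left (hm.intervalIntegrable) (hm.intervalIntegrable)]
  rcases le_total a b with h | h
  · have h1 : (∫ t in a..b, φ a) ≤ ∫ t in a..b, φ t :=
      integral_mono_on h intervalIntegrable_const hm.intervalIntegrable
        (fun x hx => hm hx.1)
    simpa [smul_eq_mul, mul_comm] using h1
  · have h1 : (∫ t in b..a, φ t) ≤ ∫ t in b..a, φ a :=
      integral_mono_on h hm.intervalIntegrable intervalIntegrable_const
        (fun x hx => hm hx.2)
    rw [intervalIntegral.integral_symm b a]
    simp only [intervalIntegral.integral_const, smul_eq_mul] at h1 ⊢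
    nlinarith [h1]

theorem stmt0 (ℓ : ℕ) (M : Matrix (Fin (ℓ + 1)) (Fin (ℓ + 1)) ℝ)
    (hoff : ∀ i j, i ≠ j → M i j ≤ 0)
    (hcol : ∀ j, 0 ≤ ∑ i, M i j)
    (hrow : ∀ i, 0 ≤ ∑ j, M i j)
    (φ : ℝ → ℝ)
    (hmono : ∀ x y : ℝ, 0 ≤ (φ x - φ y) * (x - y))
    (hφ0 : φ 0 = 0)
    (y : Fin (ℓ + 1) → ℝ) :
    0 ≤ ∑ i, ∑ j, φ (y i) * M i j * y j := by
  have hm : Monotone φ := by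
    intro a b hab
    rcases hab.eq_or_lt with rfl | h
    · exact le_rfl
    · nlinarith [hmono b a]
  set Φ : ℝ → ℝ := fun x => ∫ t in (0:ℝ)..x, φ t with hΦ
  have hΦ0 : Φ 0 = 0 := by simp [hΦ]
  have key : ∀ a b : ℝ, φ a * (b - a) ≤ Φ b - Φ a := fun a b => key_lemma φ hm a b
  have hΦnn : ∀ x : ℝ, 0 ≤ Φ x := by
    intro x
    have := key 0 x
    rw [hφ0, hΦ0] at this
    linarith
  have hA : ∀ x : ℝ, Φ x ≤ φ x * x := by
    intro x
    have := key x 0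
    rw [hΦ0] at this
    nlinarith
  have hpt : ∀ i j, M i j * (φ (y i) * y i - Φ (y i) + Φ (y j)) ≤ φ (y i) * M i j * y j := by
    intro i j
    rcases eq_or_ne i j with rfl | h
    · apply le_of_eq; ring
    · have h1 := key (y i) (y j)
      have h2 := hoff i j h
      nlinarith [mul_nonneg (neg_nonneg.2 h2) (by linarith : (0:ℝ) ≤ (Φ (y j) - Φ (y i)) - φ (y i) * (y j - y i))]
  have step1 : 0 ≤ ∑ i, ∑ j, M i j * (φ (y i) * y i - Φ (y i) + Φ (y j)) := by
    have e : ∑ i, ∑ j, M i j * (φ (y i) * y i - Φ (y i) + Φ (y j))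
        = ∑ i, (φ (y i) * y i - Φ (y i)) * (∑ j, M i j)
          + ∑ j, Φ (y j) * (∑ i, M i j) := by
      have e1 : ∀ i, ∑ j, M i j * (φ (y i) * y i - Φ (y i) + Φ (y j))
          = (φ (y i) * y i - Φ (y i)) * (∑ j, M i j) + ∑ j, M i j * Φ (y j) := by
        intro i
        rw [Finset.mul_sum, ← Finset.sum_add_distrib]
        exact Finset.sum_congr rfl fun j _ => by ring
      simp only [e1, Finset.sum_add_distrib]
      congr 1
      rw [Finset.sum_comm]
      exact Finset.sum_congr rfl fun j _ => by rw [Finset.mul_sum]; exact Finset.sum_congr rfl fun i _ => by ring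
    rw [e]
    apply add_nonneg
    · exact Finset.sum_nonneg fun i _ =>
        mul_nonneg (by linarith [hA (y i)]) (hrow i)
    · exact Finset.sum_nonneg fun j _ => mul_nonneg (hΦnn (y j)) (hcol j)
  refine step1.trans (Finset.sum_le_sum fun i _ => Finset.sum_le_sum fun j _ => hpt i j)
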